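/- (Near-optimal near-feasible solution from the gap) In the two-objective scheme for min_{y∈Y}{f(y): g(y) ≤ 0} with f, g convex on a convex compact set Y, suppose at step t of stage s one has a finite set Q ⊂ ℝ² such that for each (p,q) ∈ Q there is y_{pq} ∈ Y with f(y_{pq}) ≤ p and g(y_{pq}) ≤ q, and a valid lower bound L̲ ≤ Opt. Define Gap = max_{α∈[0,1]} min_{(p,q)∈Q} [α(p − L̲) + (1−α)q]. Then there exist convex weights λ_{pq} ≥ 0 summing to 1 such that ŷ = Σ λ_{pq} y_{pq} ∈ Y satisfies f(ŷ) ≤ Opt + Gap and g(ŷ) ≤ Gap. -/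

import Mathlib

theorem stmt16 {E : Type*} [NormedAddCommGroup E] [NormedSpace ℝ E]
    (Y : Set E) (hYcv : Convex ℝ Y) (hYcp : IsCompact Y) (hYne : Y.Nonempty)
    (f g : E → ℝ) (hf : ConvexOn ℝ Y f) (hg : ConvexOn ℝ Y g)
    (Opt : ℝ) (yopt : E) (hyopt : yopt ∈ Y) (hgopt : g yopt ≤ 0)
    (hfopt : f yopt = Opt)
    (hOpt : ∀ y ∈ Y, g y ≤ 0 → Opt ≤ f y)
    (Lb : ℝ) (hLb : Lb ≤ Opt)
    (Q : Finset (ℝ × ℝ)) (hQ : Q.Nonempty)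
    (yq : ℝ × ℝ → E)
    (hyq : ∀ pq ∈ Q, yq pq ∈ Y ∧ f (yq pq) ≤ pq.1 ∧ g (yq pq) ≤ pq.2)
    (Gap : ℝ)
    (hGap : Gap = sSup {r : ℝ | ∃ α ∈ Set.Icc (0:ℝ) 1,
        r = Q.inf' hQ (fun pq => α * (pq.1 - Lb) + (1 - α) * pq.2)}) :
    ∃ lam : ℝ × ℝ → ℝ, (∀ pq ∈ Q, 0 ≤ lam pq) ∧ (∑ pq ∈ Q, lam pq = 1) ∧
      (∑ pq ∈ Q, lam pq • yq pq) ∈ Y ∧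
      f (∑ pq ∈ Q, lam pq • yq pq) ≤ Opt + Gap ∧
      g (∑ pq ∈ Q, lam pq • yq pq) ≤ Gap := by
  classical
  -- translated points
  set v : ℝ × ℝ → ℝ × ℝ := fun pq => (pq.1 - Lb, pq.2) with hv
  have hvinj : Function.Injective v := by
    intro a b h
    rw [hv, Prod.mk.injEq] at h
    rw [Prod.ext_iff]
    exact ⟨by linarith [h.1], h.2⟩
  set S : Finset (ℝ × ℝ) := Q.image v with hS
  set C : Set (ℝ × ℝ) := convexHull ℝ (↑S) with hC
  have hCcv : Convex ℝ C := convex_convexHull ℝ _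
  have hCcp : IsCompact C := (S.finite_toSet).isCompact_convexHull ℝ
  have hCne : C.Nonempty := by
    obtain ⟨pq₀, hpq₀⟩ := hQ
    exact ⟨v pq₀, subset_convexHull ℝ _
      (Finset.mem_coe.mpr (Finset.mem_image_of_mem v hpq₀))⟩
  have hvC : ∀ pq ∈ Q, v pq ∈ C :=
    fun pq h => subset_convexHull ℝ _
      (Finset.mem_coe.mpr (Finset.mem_image_of_mem v h))
  -- minimize φ = max of coordinates over C
  have hφc : Continuous (fun x : ℝ × ℝ => max x.1 x.2) :=
    (continuous_fst).max continuous_snd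
  obtain ⟨cstar, hcstarC, hmin⟩ :=
    hCcp.exists_isMinOn hCne hφc.continuousOn
  set m : ℝ := max cstar.1 cstar.2 with hm
  have hminC : ∀ c ∈ C, m ≤ max c.1 c.2 := fun c hc => hmin hc
  -- separation
  set O : Set (ℝ × ℝ) := {x | x.1 < m ∧ x.2 < m} with hO
  have hOopen : IsOpen O := by
    have : O = (fun x : ℝ × ℝ => x.1) ⁻¹' (Set.Iio m) ∩
        (fun x : ℝ × ℝ => x.2) ⁻¹' (Set.Iio m) := rfl
    rw [this]
    exact (isOpen_Iio.preimage continuous_fst).inter (isOpen_Iio.preimage continuous_snd)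
  have hOcv : Convex ℝ O := by
    have : O = {x : ℝ × ℝ | x.1 < m} ∩ {x : ℝ × ℝ | x.2 < m} := rfl
    rw [this]
    exact (convex_halfSpace_lt (IsLinearMap.mk (fun a b => rfl) (fun c x => rfl)) m).inter
      (convex_halfSpace_lt (IsLinearMap.mk (fun a b => rfl) (fun c x => rfl)) m)
  have hdisj : Disjoint O C := by
    rw [Set.disjoint_left]
    intro x hxO hxC
    have := hminC x hxC
    rcases hxO with ⟨h1, h2⟩
    rcases max_cases x.1 x.2 with ⟨he, _⟩ | ⟨he, _⟩ <;> rw [he] at this <;> linarith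
  obtain ⟨φ, u, hφO, hφC⟩ := geometric_hahn_banach_open hOcv hOopen hCcv hdisj
  set u₁ : ℝ := φ (1, 0) with hu1def
  set u₂ : ℝ := φ (0, 1) with hu2def
  have hrep : ∀ x : ℝ × ℝ, φ x = x.1 * u₁ + x.2 * u₂ := by
    intro x
    have hx : x = x.1 • ((1:ℝ), (0:ℝ)) + x.2 • ((0:ℝ), (1:ℝ)) := by
      ext <;> simp
    have hφx : φ x = φ (x.1 • ((1:ℝ), (0:ℝ)) + x.2 • ((0:ℝ), (1:ℝ))) := by rw [← hx]
    rw [hφx, map_add, map_smul, map_smul, smul_eq_mul, smul_eq_mul]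
  -- nonnegativity of u₁, u₂
  have hOu : ∀ x y : ℝ, x < m → y < m → x * u₁ + y * u₂ < u := by
    intro x y h1 h2
    have := hφO (x, y) ⟨h1, h2⟩
    rwa [hrep] at this
  have hu1 : 0 ≤ u₁ := by
    by_contra h
    push_neg at h
    set K : ℝ := u - m * u₁ - (m - 1) * u₂ with hK
    set t : ℝ := (|K| + 1) / (-u₁) with ht
    have htpos : 0 < t := div_pos (by positivity) (by linarith)
    have h1 := hOu (m - t) (m - 1) (by linarith) (by linarith)
    have htK : t * (-u₁) = |K| + 1 := by
      rw [ht]; exact div_mul_cancel₀ _ (ne_of_gt (by linarith : (0:ℝ) < -u₁))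
    have : K ≤ |K| := le_abs_self K
    nlinarith
  have hu2 : 0 ≤ u₂ := by
    by_contra h
    push_neg at h
    set K : ℝ := u - (m - 1) * u₁ - m * u₂ with hK
    set t : ℝ := (|K| + 1) / (-u₂) with ht
    have htpos : 0 < t := div_pos (by positivity) (by linarith)
    have h1 := hOu (m - 1) (m - t) (by linarith) (by linarith)
    have htK : t * (-u₂) = |K| + 1 := by
      rw [ht]; exact div_mul_cancel₀ _ (ne_of_gt (by linarith : (0:ℝ) < -u₂))
    have : K ≤ |K| := le_abs_self K
    nlinarith
  have hs : 0 < u₁ + u₂ := by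
    rcases lt_or_eq_of_le (by linarith : (0:ℝ) ≤ u₁ + u₂) with h | h
    · exact h
    · exfalso
      have hz1 : u₁ = 0 := by linarith
      have hz2 : u₂ = 0 := by linarith
      have h1 := hOu (m - 1) (m - 1) (by linarith) (by linarith)
      have h2 := hφC cstar hcstarC
      rw [hrep] at h2
      simp only [hz1, hz2] at h1 h2
      linarith
  -- (u₁+u₂) * m ≤ u
  have hsm : (u₁ + u₂) * m ≤ u := by
    by_contra h
    push_neg at h
    set D : ℝ := (u₁ + u₂) * m - u with hD
    have hDpos : 0 < D := by linarith
    set ε : ℝ := D / (2 * (u₁ + u₂)) with hε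
    have hεpos : 0 < ε := div_pos hDpos (by linarith)
    have h1 := hOu (m - ε) (m - ε) (by linarith) (by linarith)
    have : ε * (u₁ + u₂) = D / 2 := by
      rw [hε]; field_simp
    nlinarith
  -- the dual variable α
  set α : ℝ := u₁ / (u₁ + u₂) with hα
  have hα0 : 0 ≤ α := div_nonneg hu1 (le_of_lt hs)
  have hα1 : α ≤ 1 := (div_le_one hs).mpr (by linarith)
  have h1α : 1 - α = u₂ / (u₁ + u₂) := by
    rw [hα]; field_simp; ring
  have hαm : ∀ pq ∈ Q, m ≤ α * (pq.1 - Lb) + (1 - α) * pq.2 := by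
    intro pq hpq
    have h2 := hφC (v pq) (hvC pq hpq)
    rw [hrep] at h2
    simp only [hv] at h2
    have : α * (pq.1 - Lb) + (1 - α) * pq.2 =
        ((pq.1 - Lb) * u₁ + pq.2 * u₂) / (u₁ + u₂) := by
      rw [h1α, hα]; field_simp
    rw [this, le_div_iff₀ hs]
    nlinarith
  -- m ≤ Gap
  have hbdd : BddAbove {r : ℝ | ∃ α ∈ Set.Icc (0:ℝ) 1,
      r = Q.inf' hQ (fun pq => α * (pq.1 - Lb) + (1 - α) * pq.2)} := by
    obtain ⟨pq₀, hpq₀⟩ := hQ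
    refine ⟨|pq₀.1 - Lb| + |pq₀.2|, ?_⟩
    rintro r ⟨β, ⟨hβ0, hβ1⟩, rfl⟩
    have h1 := Finset.inf'_le (fun pq => β * (pq.1 - Lb) + (1 - β) * pq.2) hpq₀
    have h2 : pq₀.1 - Lb ≤ |pq₀.1 - Lb| := le_abs_self _
    have h3 : pq₀.2 ≤ |pq₀.2| := le_abs_self _
    have h4 : 0 ≤ |pq₀.1 - Lb| := abs_nonneg _
    have h5 : 0 ≤ |pq₀.2| := abs_nonneg _
    nlinarith [mul_le_mul_of_nonneg_left h2 hβ0, mul_le_mul_of_nonneg_left h3 (by linarith : (0:ℝ) ≤ 1 - β)]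
  have hmGap : m ≤ Gap := by
    have hmem : Q.inf' hQ (fun pq => α * (pq.1 - Lb) + (1 - α) * pq.2) ∈
        {r : ℝ | ∃ α ∈ Set.Icc (0:ℝ) 1,
          r = Q.inf' hQ (fun pq => α * (pq.1 - Lb) + (1 - α) * pq.2)} :=
      ⟨α, ⟨hα0, hα1⟩, rfl⟩
    have h1 : m ≤ Q.inf' hQ (fun pq => α * (pq.1 - Lb) + (1 - α) * pq.2) :=
      Finset.le_inf' hQ _ hαm
    calc m ≤ _ := h1
      _ ≤ Gap := hGap ▸ le_csSup hbdd hmem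
  -- extract weights from cstar ∈ C
  rw [hC, Finset.convexHull_eq] at hcstarC
  obtain ⟨w, hw0, hw1, hwc⟩ := hcstarC
  rw [Finset.centerMass_eq_of_sum_1 _ _ hw1] at hwc
  set lam : ℝ × ℝ → ℝ := fun pq => w (v pq) with hlam
  have hlam0 : ∀ pq ∈ Q, 0 ≤ lam pq := by
    intro pq h
    exact hw0 (v pq) (Finset.mem_image_of_mem v h)
  have hlamsum : ∑ pq ∈ Q, lam pq = 1 := by
    rw [← hw1, hS, Finset.sum_image (fun a _ b _ h => hvinj h)]
  have hlamc : ∑ pq ∈ Q, lam pq • v pq = cstar := by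
    rw [← hwc, hS, Finset.sum_image (fun a _ b _ h => hvinj h)]
    simp
    rfl
  have hc1 : ∑ pq ∈ Q, lam pq * (pq.1 - Lb) = cstar.1 := by
    have := congrArg Prod.fst hlamc
    rw [Prod.fst_sum] at this
    simpa [hv] using this
  have hc2 : ∑ pq ∈ Q, lam pq * pq.2 = cstar.2 := by
    have := congrArg Prod.snd hlamc
    rw [Prod.snd_sum] at this
    simpa [hv] using this
  have hcm1 : cstar.1 ≤ m := le_max_left _ _
  have hcm2 : cstar.2 ≤ m := le_max_right _ _
  refine ⟨lam, hlam0, hlamsum, ?_, ?_, ?_⟩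
  · exact hYcv.sum_mem hlam0 hlamsum (fun pq h => (hyq pq h).1)
  · have hJ := hf.map_sum_le hlam0 hlamsum (fun pq h => (hyq pq h).1)
    have h2 : ∑ pq ∈ Q, lam pq * f (yq pq) ≤ ∑ pq ∈ Q, lam pq * pq.1 :=
      Finset.sum_le_sum fun pq h =>
        mul_le_mul_of_nonneg_left (hyq pq h).2.1 (hlam0 pq h)
    have h3 : ∑ pq ∈ Q, lam pq * pq.1 = cstar.1 + Lb := by
      have he : ∑ pq ∈ Q, lam pq * pq.1 =
          ∑ pq ∈ Q, (lam pq * (pq.1 - Lb) + lam pq * Lb) := by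
        apply Finset.sum_congr rfl; intro pq _; ring
      rw [he, Finset.sum_add_distrib, hc1, ← Finset.sum_mul, hlamsum, one_mul]
    simp only [smul_eq_mul] at hJ
    linarith
  · have hJ := hg.map_sum_le hlam0 hlamsum (fun pq h => (hyq pq h).1)
    have h2 : ∑ pq ∈ Q, lam pq * g (yq pq) ≤ ∑ pq ∈ Q, lam pq * pq.2 :=
      Finset.sum_le_sum fun pq h =>
        mul_le_mul_of_nonneg_left (hyq pq h).2.2 (hlam0 pq h)
    rw [hc2] at h2
    simp only [smul_eq_mul] at hJ
    linarith
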